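/- There is a universal constant C > 0 such that for every Banach space X, every integer m ≥ 2, and every function Φ : {−1,1}^m → X: 𝔼_ε ‖Φ(ε)‖ ≤ ‖𝔼_ε Φ(ε)‖ + C · σ_Φ · T2^{(m)}(X). -/

import Mathlib

open scoped BigOperators

noncomputable section

def sgnR (b : Bool) : ℝ := if b then 1 else -1

/-- Uniform average of a real-valued function over a finite type. -/
def Eavg {α : Type} [Fintype α] (f : α → ℝ) : ℝ := (∑ x, f x) / (Fintype.card α : ℝ)

/-- Uniform average of a vector-valued function over a finite type. -/
def EavgVR {α : Type} [Fintype α] {X : Type*} [AddCommGroup X] [Module ℝ X] (f : α → X) : X :=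
  (Fintype.card α : ℝ)⁻¹ • ∑ x, f x

/-- Flip the `p`-th sign of `ε`. -/
def flipAt {ι : Type} [DecidableEq ι] (ε : ι → Bool) (p : ι) : ι → Bool :=
  Function.update ε p (!(ε p))

/-- The regularity parameter `σ_Φ` of a map on the Boolean hypercube with values in a
normed space; `‖∂_pΦ(ε)‖ = ‖Φ(ε) − Φ(ε̄^p)‖/2`. -/
def sigma {ι : Type} [Fintype ι] [DecidableEq ι] {X : Type*} [NormedAddCommGroup X]
    (Φ : (ι → Bool) → X) : ℝ :=
  Real.log (Fintype.card ι) *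
    Eavg fun ε => Real.sqrt (∑ p : ι, (‖Φ ε - Φ (flipAt ε p)‖ / 2) ^ 2)

/-- The type-2 constant with `m` vectors of a normed space. -/
def T2With (m : ℕ) (X : Type*) [NormedAddCommGroup X] [NormedSpace ℝ X] : ℝ :=
  sInf {T : ℝ | 0 ≤ T ∧ ∀ x : Fin m → X,
    Real.sqrt (Eavg fun ε : Fin m → Bool => ‖∑ i, sgnR (ε i) • x i‖ ^ 2)
      ≤ T * Real.sqrt (∑ i, ‖x i‖ ^ 2)}

namespace P8

open Finset
set_option linter.unusedSectionVars false

variable {m : ℕ} {X : Type} [NormedAddCommGroup X] [NormedSpace ℝ X]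

lemma sgnR_mul_self (b : Bool) : sgnR b * sgnR b = 1 := by cases b <;> simp [sgnR]

lemma abs_sgnR (b : Bool) : |sgnR b| = 1 := by cases b <;> simp [sgnR]

lemma sgnR_not (b : Bool) : sgnR (!b) = - sgnR b := by cases b <;> simp [sgnR]

lemma norm_sgnR_smul (b : Bool) (x : X) : ‖sgnR b • x‖ = ‖x‖ := by
  rw [norm_smul, Real.norm_eq_abs, abs_sgnR, one_mul]

lemma card_cube : (Fintype.card (Fin m → Bool) : ℝ) = 2 ^ m := by
  simp [Fintype.card_fun]

lemma flipAt_flipAt (η : Fin m → Bool) (q : Fin m) : flipAt (flipAt η q) q = η := by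
  funext r
  by_cases h : r = q <;> simp [flipAt, Function.update, h]

lemma flipAt_apply_self (η : Fin m → Bool) (q : Fin m) : flipAt η q q = !(η q) := by
  simp [flipAt]

lemma flipAt_apply_ne (η : Fin m → Bool) (q r : Fin m) (h : r ≠ q) : flipAt η q r = η r := by
  simp [flipAt, Function.update, h]

lemma sum_flipAt (q : Fin m) (F : (Fin m → Bool) → X) :
    ∑ δ : Fin m → Bool, F δ = ∑ δ : Fin m → Bool, F (flipAt δ q) := by
  have h : Function.Involutive (fun δ : Fin m → Bool => flipAt δ q) := fun δ => flipAt_flipAt δ q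
  exact (Fintype.sum_bijective _ h.bijective _ _ (fun δ => rfl)).symm.trans rfl

/-- key factorization: sum over the cube of a product of per-coordinate factors. -/
lemma sum_prod_bool (g : Fin m → Bool → ℝ) :
    ∑ ε : Fin m → Bool, ∏ r, g r (ε r) = ∏ r, (g r true + g r false) := by
  have h := Finset.prod_univ_sum (fun _ : Fin m => (Finset.univ : Finset Bool)) (fun i b => g i b)
  simp only [Fintype.piFinset_univ] at h
  rw [← h]
  exact Finset.prod_congr rfl fun r _ => by simp [Fintype.sum_bool]


def D (Φ : (Fin m → Bool) → X) (q : Fin m) (η : Fin m → Bool) : X :=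
  (2:ℝ)⁻¹ • (Φ η - Φ (flipAt η q))

def H (Φ : (Fin m → Bool) → X) (δ ρ : Fin m → Bool) : X := ∑ q, sgnR (ρ q) • D Φ q δ

def M (Φ : (Fin m → Bool) → X) : ℝ :=
  ((2:ℝ) ^ m)⁻¹ * ∑ δ : Fin m → Bool, ((2:ℝ) ^ m)⁻¹ * ∑ ρ : Fin m → Bool, ‖H Φ δ ρ‖

def chi (ε δ : Fin m → Bool) (q : Fin m) : ℝ := sgnR (ε q) * sgnR (δ q)

def w (s x : ℝ) : ℝ := (1 + s * x) / 2

def TT (Φ : (Fin m → Bool) → X) (s : ℝ) (ε : Fin m → Bool) : X :=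
  ∑ δ : Fin m → Bool, (∏ q, w s (chi ε δ q)) • Φ δ

def GG (Φ : (Fin m → Bool) → X) (s : ℝ) (ε : Fin m → Bool) : X :=
  ∑ δ : Fin m → Bool,
    (∑ q, (∏ r ∈ Finset.univ.erase q, w s (chi ε δ r)) * (chi ε δ q / 2)) • Φ δ

lemma chi_mul_self (ε δ : Fin m → Bool) (q : Fin m) : chi ε δ q * chi ε δ q = 1 := by
  rw [chi, mul_mul_mul_comm, sgnR_mul_self, sgnR_mul_self, one_mul]

lemma hasDerivAt_TT (Φ : (Fin m → Bool) → X) (ε : Fin m → Bool) (s : ℝ) :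
    HasDerivAt (fun s => TT Φ s ε) (GG Φ s ε) s := by
  unfold TT GG
  apply HasDerivAt.fun_sum
  intro δ _
  have hw : ∀ q ∈ Finset.univ (α := Fin m),
      HasDerivAt (fun s => w s (chi ε δ q)) (chi ε δ q / 2) s := by
    intro q _
    have : HasDerivAt (fun s : ℝ => (1 + s * chi ε δ q) / 2) (chi ε δ q / 2) s := by
      simpa using (((hasDerivAt_id s).mul_const (chi ε δ q)).const_add 1).div_const 2
    simpa [w] using this
  have h := (HasDerivAt.finset_prod hw).smul_const (Φ δ)
  simpa [smul_eq_mul] using h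

lemma continuous_GG (Φ : (Fin m → Bool) → X) (ε : Fin m → Bool) :
    Continuous (fun s => GG Φ s ε) := by
  unfold GG
  apply continuous_finset_sum
  intro δ _
  apply Continuous.smul _ continuous_const
  apply continuous_finset_sum
  intro q _
  exact ((continuous_finset_prod _ fun r _ => by unfold w; fun_prop).mul continuous_const)

lemma chi_flipAt_self (ε δ : Fin m → Bool) (q : Fin m) :
    chi ε (flipAt δ q) q = - chi ε δ q := by
  rw [chi, chi, flipAt_apply_self, sgnR_not, mul_neg]

lemma chi_flipAt_ne (ε δ : Fin m → Bool) (q r : Fin m) (h : r ≠ q) :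
    chi ε (flipAt δ q) r = chi ε δ r := by
  rw [chi, chi, flipAt_apply_ne _ _ _ h]

lemma GG_form1 (Φ : (Fin m → Bool) → X) (s : ℝ) (ε : Fin m → Bool) :
    GG Φ s ε = ∑ q, (2:ℝ)⁻¹ • ∑ δ : Fin m → Bool,
      ((∏ r ∈ Finset.univ.erase q, w s (chi ε δ r)) * chi ε δ q) • D Φ q δ := by
  rw [GG]
  simp_rw [Finset.sum_smul]
  rw [Finset.sum_comm]
  refine Finset.sum_congr rfl fun q _ => ?_
  set F : (Fin m → Bool) → X := fun δ =>
    ((∏ r ∈ Finset.univ.erase q, w s (chi ε δ r)) * (chi ε δ q / 2)) • Φ δ with hF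
  have h2 : ∑ δ : Fin m → Bool, F δ = ∑ δ : Fin m → Bool, F (flipAt δ q) := sum_flipAt q F
  have h3 : ∀ δ, F δ + F (flipAt δ q) =
      ((∏ r ∈ Finset.univ.erase q, w s (chi ε δ r)) * chi ε δ q) • D Φ q δ := by
    intro δ
    have hp : (∏ r ∈ Finset.univ.erase q, w s (chi ε (flipAt δ q) r)) =
        ∏ r ∈ Finset.univ.erase q, w s (chi ε δ r) :=
      Finset.prod_congr rfl fun r hr => by
        rw [chi_flipAt_ne _ _ _ _ (Finset.ne_of_mem_erase hr)]
    simp only [hF, hp, chi_flipAt_self, D]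
    rw [smul_smul, smul_sub]
    set P := ∏ r ∈ Finset.univ.erase q, w s (chi ε δ r)
    set c := chi ε δ q
    have e1 : P * (c / 2) = P * c * (2:ℝ)⁻¹ := by ring
    have e2 : P * (-c / 2) = -(P * c * (2:ℝ)⁻¹) := by ring
    rw [e1, e2, neg_smul, ← sub_eq_add_neg]
  calc ∑ δ : Fin m → Bool, F δ
      = (2:ℝ)⁻¹ • ((∑ δ : Fin m → Bool, F δ) + ∑ δ : Fin m → Bool, F (flipAt δ q)) := by
        rw [← h2, ← two_smul ℝ, smul_smul]; norm_num
    _ = (2:ℝ)⁻¹ • ∑ δ : Fin m → Bool,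
          ((∏ r ∈ Finset.univ.erase q, w s (chi ε δ r)) * chi ε δ q) • D Φ q δ := by
        rw [← Finset.sum_add_distrib]
        exact congrArg _ (Finset.sum_congr rfl fun δ _ => h3 δ)

lemma coeff_rewrite {s : ℝ} (hs : 1 - s^2 ≠ 0) (ε δ : Fin m → Bool) (q : Fin m) :
    (2:ℝ)⁻¹ * ((∏ r ∈ Finset.univ.erase q, w s (chi ε δ r)) * chi ε δ q) =
      (∏ r, w s (chi ε δ r)) * ((2 / (1 - s^2)) * ((chi ε δ q - s)/2)) := by
  rw [← Finset.mul_prod_erase Finset.univ _ (Finset.mem_univ q)]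
  have hc := chi_mul_self ε δ q
  set c := chi ε δ q
  set P := ∏ r ∈ Finset.univ.erase q, w s (chi ε δ r)
  have h2 : (2 / (1 - s^2)) * ((c - s)/2) * ((1 + s*c)/2) = c * (2:ℝ)⁻¹ := by
    field_simp
    linear_combination s * hc
  calc (2:ℝ)⁻¹ * (P * c) = P * (c * (2:ℝ)⁻¹) := by ring
    _ = P * ((2 / (1 - s^2)) * ((c - s)/2) * ((1 + s*c)/2)) := by rw [h2]
    _ = w s c * P * (2 / (1 - s^2) * ((c - s)/2)) := by rw [w]; ring

lemma GG_form2 (Φ : (Fin m → Bool) → X) {s : ℝ} (hs : 1 - s^2 ≠ 0) (ε : Fin m → Bool) :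
    GG Φ s ε = ∑ δ : Fin m → Bool, (∏ r, w s (chi ε δ r)) •
      ((2 / (1 - s^2)) • ∑ q, ((chi ε δ q - s)/2) • D Φ q δ) := by
  rw [GG_form1]
  simp_rw [Finset.smul_sum]
  rw [Finset.sum_comm]
  refine Finset.sum_congr rfl fun δ _ => ?_
  refine Finset.sum_congr rfl fun q _ => ?_
  simp only [smul_smul]
  rw [coeff_rewrite hs]

lemma abs_chi (ε δ : Fin m → Bool) (q : Fin m) : |chi ε δ q| = 1 := by
  rw [chi, abs_mul, abs_sgnR, abs_sgnR, one_mul]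

lemma contraction (a : Fin m → ℝ) (ha : ∀ q, |a q| ≤ 1) (v : Fin m → X) :
    ‖∑ q, a q • v q‖ ≤ ∑ ρ : Fin m → Bool,
      (∏ i, (1 + a i * sgnR (ρ i)) / 2) * ‖∑ q, sgnR (ρ q) • v q‖ := by
  have hu : ∀ (i : Fin m) (b : Bool), 0 ≤ (1 + a i * sgnR b) / 2 := by
    intro i b
    have h1 : |a i * sgnR b| ≤ 1 := by
      rw [abs_mul, abs_sgnR, mul_one]; exact ha i
    have h2 := neg_abs_le (a i * sgnR b)
    linarith
  have hscal : ∀ q : Fin m,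
      ∑ ρ : Fin m → Bool, (∏ i, (1 + a i * sgnR (ρ i)) / 2) * sgnR (ρ q) = a q := by
    intro q
    set g : Fin m → Bool → ℝ := fun i b =>
      if i = q then (1 + a i * sgnR b) / 2 * sgnR b else (1 + a i * sgnR b) / 2 with hg
    have h1 : ∀ ρ : Fin m → Bool,
        (∏ i, (1 + a i * sgnR (ρ i)) / 2) * sgnR (ρ q) = ∏ i, g i (ρ i) := by
      intro ρ
      have e1 : ∏ i ∈ Finset.univ.erase q, g i (ρ i) =
          ∏ i ∈ Finset.univ.erase q, (1 + a i * sgnR (ρ i)) / 2 :=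
        Finset.prod_congr rfl fun r hr => by
          show (if r = q then _ else _) = _
          rw [if_neg (Finset.ne_of_mem_erase hr)]
      have e2 : g q (ρ q) = (1 + a q * sgnR (ρ q)) / 2 * sgnR (ρ q) := by
        show (if q = q then _ else _) = _
        rw [if_pos rfl]
      rw [← Finset.mul_prod_erase Finset.univ (fun i => g i (ρ i)) (Finset.mem_univ q), e1, e2,
          ← Finset.mul_prod_erase Finset.univ (fun i => (1 + a i * sgnR (ρ i)) / 2)
            (Finset.mem_univ q)]
      ring
    rw [Finset.sum_congr rfl fun ρ _ => h1 ρ, sum_prod_bool]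
    have hfac : ∀ i : Fin m, g i true + g i false = if i = q then a i else 1 := by
      intro i
      by_cases h : i = q <;> simp only [hg, h, if_true, if_false, sgnR] <;> norm_num <;> ring
    rw [Finset.prod_congr rfl fun i _ => hfac i, Finset.prod_ite_eq' Finset.univ q a,
        if_pos (Finset.mem_univ q)]
  have hid : (∑ ρ : Fin m → Bool, (∏ i, (1 + a i * sgnR (ρ i)) / 2) •
      (∑ q, sgnR (ρ q) • v q)) = ∑ q, a q • v q := by
    simp_rw [Finset.smul_sum, smul_smul]
    rw [Finset.sum_comm]
    exact Finset.sum_congr rfl fun q _ => by rw [← Finset.sum_smul, hscal q]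
  calc ‖∑ q, a q • v q‖
      = ‖∑ ρ : Fin m → Bool, (∏ i, (1 + a i * sgnR (ρ i)) / 2) •
          (∑ q, sgnR (ρ q) • v q)‖ := by rw [hid]
    _ ≤ ∑ ρ : Fin m → Bool, ‖(∏ i, (1 + a i * sgnR (ρ i)) / 2) •
          (∑ q, sgnR (ρ q) • v q)‖ := norm_sum_le _ _
    _ = ∑ ρ : Fin m → Bool, (∏ i, (1 + a i * sgnR (ρ i)) / 2) * ‖∑ q, sgnR (ρ q) • v q‖ := by
        refine Finset.sum_congr rfl fun ρ _ => ?_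
        rw [norm_smul, Real.norm_eq_abs,
          abs_of_nonneg (Finset.prod_nonneg fun i _ => hu i (ρ i))]

lemma orth (q r : Fin m) (h : q ≠ r) :
    ∑ ρ : Fin m → Bool, sgnR (ρ q) * sgnR (ρ r) = 0 := by
  set g : Fin m → Bool → ℝ := fun i b =>
    if i = q then sgnR b else if i = r then sgnR b else 1 with hg
  have h1 : ∀ ρ : Fin m → Bool, sgnR (ρ q) * sgnR (ρ r) = ∏ i, g i (ρ i) := by
    intro ρ
    have hmem : r ∈ Finset.univ.erase q := Finset.mem_erase.2 ⟨Ne.symm h, Finset.mem_univ r⟩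
    rw [← Finset.mul_prod_erase Finset.univ (fun i => g i (ρ i)) (Finset.mem_univ q),
        ← Finset.mul_prod_erase (Finset.univ.erase q) (fun i => g i (ρ i)) hmem]
    have e1 : g q (ρ q) = sgnR (ρ q) := by
      show (if q = q then _ else _) = _; rw [if_pos rfl]
    have e2 : g r (ρ r) = sgnR (ρ r) := by
      show (if r = q then _ else _) = _; rw [if_neg (Ne.symm h), if_pos rfl]
    have e3 : ∏ i ∈ (Finset.univ.erase q).erase r, g i (ρ i) = 1 := by
      refine Finset.prod_eq_one fun i hi => ?_
      have hiq : i ≠ q := Finset.ne_of_mem_erase (Finset.mem_of_mem_erase hi)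
      have hir : i ≠ r := Finset.ne_of_mem_erase hi
      show (if i = q then _ else _) = _
      rw [if_neg hiq, if_neg hir]
    rw [e1, e2, e3, mul_one]
  rw [Finset.sum_congr rfl fun ρ _ => h1 ρ, sum_prod_bool]
  refine Finset.prod_eq_zero (Finset.mem_univ q) ?_
  show (if q = q then _ else _) + (if q = q then _ else _) = 0
  rw [if_pos rfl, if_pos rfl]
  simp [sgnR]

lemma sum_sgn_smul (x : Fin m → X) (q : Fin m) :
    ∑ ρ : Fin m → Bool, sgnR (ρ q) • ∑ t, sgnR (ρ t) • x t = ((2:ℝ)^m) • x q := by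
  simp_rw [Finset.smul_sum, smul_smul]
  rw [Finset.sum_comm]
  have : ∀ t : Fin m, ∑ ρ : Fin m → Bool, (sgnR (ρ q) * sgnR (ρ t)) • x t =
      if q = t then ((2:ℝ)^m) • x q else 0 := by
    intro t
    by_cases h : q = t
    · subst h
      rw [if_pos rfl, ← Finset.sum_smul]
      congr 1
      rw [Finset.sum_congr rfl fun ρ _ => sgnR_mul_self (ρ q), Finset.sum_const,
        Finset.card_univ]
      simp [Fintype.card_fun]
    · rw [if_neg h, ← Finset.sum_smul, orth q t h, zero_smul]
  rw [Finset.sum_congr rfl fun t _ => this t, Finset.sum_ite_eq Finset.univ q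
    (fun _ => ((2:ℝ)^m) • x q), if_pos (Finset.mem_univ q)]

lemma norm_le_avg_H (x : Fin m → X) (q : Fin m) :
    ‖x q‖ ≤ ((2:ℝ)^m)⁻¹ * ∑ ρ : Fin m → Bool, ‖∑ t, sgnR (ρ t) • x t‖ := by
  have h2 : (0:ℝ) < 2^m := by positivity
  have := sum_sgn_smul x q
  have hx : x q = ((2:ℝ)^m)⁻¹ • ∑ ρ : Fin m → Bool, sgnR (ρ q) • ∑ t, sgnR (ρ t) • x t := by
    rw [this, smul_smul, inv_mul_cancel₀ (ne_of_gt h2), one_smul]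
  calc ‖x q‖ = ‖((2:ℝ)^m)⁻¹ • ∑ ρ : Fin m → Bool, sgnR (ρ q) • ∑ t, sgnR (ρ t) • x t‖ := by
        rw [← hx]
    _ ≤ ((2:ℝ)^m)⁻¹ * ∑ ρ : Fin m → Bool, ‖∑ t, sgnR (ρ t) • x t‖ := by
        rw [norm_smul, Real.norm_eq_abs, abs_of_pos (by positivity)]
        refine mul_le_mul_of_nonneg_left ?_ (le_of_lt (by positivity))
        refine (norm_sum_le _ _).trans (le_of_eq ?_)
        exact Finset.sum_congr rfl fun ρ _ => norm_sgnR_smul _ _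

lemma M_nonneg (Φ : (Fin m → Bool) → X) : 0 ≤ M Φ := by
  rw [M]; positivity

lemma w_nonneg {s x : ℝ} (hs0 : 0 ≤ s) (hs1 : s ≤ 1) (hx : |x| = 1) : 0 ≤ w s x := by
  rw [w]
  have h1 : |s * x| ≤ 1 := by rw [abs_mul, hx, mul_one, abs_of_nonneg hs0]; exact hs1
  have := neg_abs_le (s * x)
  linarith

lemma sum_prod_erase_w {s : ℝ} (δ : Fin m → Bool) (q : Fin m) :
    ∑ ε : Fin m → Bool, ∏ r ∈ Finset.univ.erase q, w s (chi ε δ r) = 2 := by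
  set h : Fin m → Bool → ℝ := fun i b => if i = q then 1 else w s (sgnR b * sgnR (δ i)) with hh
  have h1 : ∀ ε : Fin m → Bool, ∏ r ∈ Finset.univ.erase q, w s (chi ε δ r) = ∏ i, h i (ε i) := by
    intro ε
    rw [← Finset.mul_prod_erase Finset.univ (fun i => h i (ε i)) (Finset.mem_univ q)]
    have e2 : h q (ε q) = 1 := by
      show (if q = q then _ else _) = _; rw [if_pos rfl]
    have e1 : ∏ i ∈ Finset.univ.erase q, h i (ε i) =
        ∏ i ∈ Finset.univ.erase q, w s (chi ε δ i) :=
      Finset.prod_congr rfl fun r hr => by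
        show (if r = q then _ else _) = _
        rw [if_neg (Finset.ne_of_mem_erase hr)]; rfl
    rw [e2, e1, one_mul]
  rw [Finset.sum_congr rfl fun ε _ => h1 ε, sum_prod_bool]
  have hfac : ∀ i, h i true + h i false = if i = q then 2 else 1 := by
    intro i
    by_cases hiq : i = q
    · simp only [hh, hiq, if_true]; norm_num
    · simp only [hh, hiq, if_false]
      rw [show sgnR true = 1 from rfl, show sgnR false = -1 from rfl, w, w]
      ring
  rw [Finset.prod_congr rfl fun i _ => hfac i,
    Finset.prod_ite_eq' Finset.univ q (fun _ => (2:ℝ)), if_pos (Finset.mem_univ q)]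

lemma avg_tail (Φ : (Fin m → Bool) → X) {s : ℝ} (hs0 : 0 ≤ s) (hs1 : s ≤ 1) :
    ((2:ℝ)^m)⁻¹ * ∑ ε : Fin m → Bool, ‖GG Φ s ε‖ ≤ m * M Φ := by
  have hPe : ∀ (ε δ : Fin m → Bool) (q : Fin m),
      |(∏ r ∈ Finset.univ.erase q, w s (chi ε δ r)) * chi ε δ q| =
        ∏ r ∈ Finset.univ.erase q, w s (chi ε δ r) := by
    intro ε δ q
    rw [abs_mul, abs_chi, mul_one,
      abs_of_nonneg (Finset.prod_nonneg fun r _ => w_nonneg hs0 hs1 (abs_chi ε δ r))]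
  have hpt : ∀ ε, ‖GG Φ s ε‖ ≤ ∑ q, (2:ℝ)⁻¹ *
      ∑ δ : Fin m → Bool, (∏ r ∈ Finset.univ.erase q, w s (chi ε δ r)) * ‖D Φ q δ‖ := by
    intro ε
    rw [GG_form1]
    refine (norm_sum_le _ _).trans (Finset.sum_le_sum fun q _ => ?_)
    rw [norm_smul, Real.norm_eq_abs, abs_of_nonneg (by norm_num : (0:ℝ) ≤ 2⁻¹)]
    refine mul_le_mul_of_nonneg_left ((norm_sum_le _ _).trans (le_of_eq ?_)) (by norm_num)
    refine Finset.sum_congr rfl fun δ _ => ?_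
    rw [norm_smul, Real.norm_eq_abs, hPe ε δ q]
  have hsum : ∑ ε : Fin m → Bool, ∑ q, (2:ℝ)⁻¹ *
      ∑ δ : Fin m → Bool, (∏ r ∈ Finset.univ.erase q, w s (chi ε δ r)) * ‖D Φ q δ‖ =
      ∑ q, ∑ δ : Fin m → Bool, ‖D Φ q δ‖ := by
    rw [Finset.sum_comm]
    refine Finset.sum_congr rfl fun q _ => ?_
    rw [← Finset.mul_sum, Finset.sum_comm]
    have : ∀ δ : Fin m → Bool,
        ∑ ε : Fin m → Bool, (∏ r ∈ Finset.univ.erase q, w s (chi ε δ r)) * ‖D Φ q δ‖ =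
          2 * ‖D Φ q δ‖ := by
      intro δ
      rw [← Finset.sum_mul, sum_prod_erase_w]
    rw [Finset.sum_congr rfl fun δ _ => this δ, ← Finset.mul_sum, ← mul_assoc]
    norm_num
  have hD : ∀ q : Fin m, ((2:ℝ)^m)⁻¹ * ∑ δ : Fin m → Bool, ‖D Φ q δ‖ ≤ M Φ := by
    intro q
    rw [M]
    refine mul_le_mul_of_nonneg_left (Finset.sum_le_sum fun δ _ => ?_) (by positivity)
    exact norm_le_avg_H (fun t => D Φ t δ) q
  calc ((2:ℝ)^m)⁻¹ * ∑ ε : Fin m → Bool, ‖GG Φ s ε‖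
      ≤ ((2:ℝ)^m)⁻¹ * ∑ ε : Fin m → Bool, ∑ q, (2:ℝ)⁻¹ *
          ∑ δ : Fin m → Bool, (∏ r ∈ Finset.univ.erase q, w s (chi ε δ r)) * ‖D Φ q δ‖ :=
        mul_le_mul_of_nonneg_left (Finset.sum_le_sum fun ε _ => hpt ε) (by positivity)
    _ = ∑ q : Fin m, ((2:ℝ)^m)⁻¹ * ∑ δ : Fin m → Bool, ‖D Φ q δ‖ := by
        rw [hsum, Finset.mul_sum]
    _ ≤ ∑ _q : Fin m, M Φ := Finset.sum_le_sum fun q _ => hD q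
    _ = m * M Φ := by rw [Finset.sum_const, Finset.card_univ, Fintype.card_fin, nsmul_eq_mul]

lemma coord_sum (s d e : ℝ) (hd : d * d = 1) :
    w s d * ((1 + (d - s)/2 * e)/2) + w s (-d) * ((1 + (-d - s)/2 * e)/2) = 1/2 := by
  rw [w, w]
  linear_combination (s*e/4) * hd

lemma sum_prod_wu {s : ℝ} (δ ρ : Fin m → Bool) :
    ∑ ε : Fin m → Bool, (∏ r, w s (chi ε δ r)) *
      (∏ i, (1 + (chi ε δ i - s)/2 * sgnR (ρ i))/2) = ((2:ℝ)^m)⁻¹ := by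
  set g : Fin m → Bool → ℝ := fun i b => w s (sgnR b * sgnR (δ i)) *
    ((1 + (sgnR b * sgnR (δ i) - s)/2 * sgnR (ρ i))/2) with hg
  have h1 : ∀ ε : Fin m → Bool, (∏ r, w s (chi ε δ r)) *
      (∏ i, (1 + (chi ε δ i - s)/2 * sgnR (ρ i))/2) = ∏ i, g i (ε i) := by
    intro ε
    rw [← Finset.prod_mul_distrib]
    rfl
  rw [Finset.sum_congr rfl fun ε _ => h1 ε, sum_prod_bool]
  have hfac : ∀ i, g i true + g i false = 1/2 := by
    intro i
    have hT : sgnR true = 1 := rfl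
    have hF : sgnR false = -1 := rfl
    simp only [hg, hT, hF, one_mul, neg_one_mul]
    exact coord_sum s (sgnR (δ i)) (sgnR (ρ i)) (sgnR_mul_self (δ i))
  rw [Finset.prod_congr rfl fun i _ => hfac i, Finset.prod_const, Finset.card_univ,
    Fintype.card_fin]
  rw [one_div, inv_pow]

lemma avg_main (Φ : (Fin m → Bool) → X) {s : ℝ} (hs0 : 0 ≤ s) (hs1 : s < 1) :
    ((2:ℝ)^m)⁻¹ * ∑ ε : Fin m → Bool, ‖GG Φ s ε‖ ≤ (2/(1-s)) * M Φ := by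
  have hs2 : 0 < 1 - s^2 := by nlinarith
  have hsne : 1 - s^2 ≠ 0 := ne_of_gt hs2
  have hpt : ∀ ε, ‖GG Φ s ε‖ ≤ (2/(1-s^2)) * ∑ δ : Fin m → Bool, ∑ ρ : Fin m → Bool,
      ((∏ r, w s (chi ε δ r)) * (∏ i, (1 + (chi ε δ i - s)/2 * sgnR (ρ i))/2)) *
        ‖H Φ δ ρ‖ := by
    intro ε
    rw [GG_form2 Φ hsne, Finset.mul_sum]
    refine (norm_sum_le _ _).trans (Finset.sum_le_sum fun δ _ => ?_)
    have hw0 : (0:ℝ) ≤ ∏ r, w s (chi ε δ r) :=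
      Finset.prod_nonneg fun r _ => w_nonneg hs0 hs1.le (abs_chi ε δ r)
    rw [norm_smul, Real.norm_eq_abs, abs_of_nonneg hw0, norm_smul, Real.norm_eq_abs,
      abs_of_nonneg (by positivity : (0:ℝ) ≤ 2/(1-s^2))]
    have hcontr := contraction (fun q => (chi ε δ q - s)/2)
      (fun q => by
        rw [abs_div, abs_of_nonneg (by norm_num : (0:ℝ) ≤ 2)]
        have := abs_chi ε δ q
        have h1 : |chi ε δ q - s| ≤ |chi ε δ q| + |s| := abs_sub _ _
        rw [this, abs_of_nonneg hs0] at h1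
        linarith)
      (fun q => D Φ q δ)
    calc (∏ r, w s (chi ε δ r)) * (2/(1-s^2) * ‖∑ q, ((chi ε δ q - s)/2) • D Φ q δ‖)
        ≤ (∏ r, w s (chi ε δ r)) * (2/(1-s^2) * ∑ ρ : Fin m → Bool,
            (∏ i, (1 + (chi ε δ i - s)/2 * sgnR (ρ i))/2) * ‖H Φ δ ρ‖) := by
          refine mul_le_mul_of_nonneg_left (mul_le_mul_of_nonneg_left ?_ (by positivity)) hw0
          exact hcontr
      _ = 2/(1-s^2) * ∑ ρ : Fin m → Bool,
            ((∏ r, w s (chi ε δ r)) * (∏ i, (1 + (chi ε δ i - s)/2 * sgnR (ρ i))/2)) *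
              ‖H Φ δ ρ‖ := by
          rw [Finset.mul_sum, Finset.mul_sum, Finset.mul_sum]
          refine Finset.sum_congr rfl fun ρ _ => by ring
  have hsum : ∑ ε : Fin m → Bool, ∑ δ : Fin m → Bool, ∑ ρ : Fin m → Bool,
      ((∏ r, w s (chi ε δ r)) * (∏ i, (1 + (chi ε δ i - s)/2 * sgnR (ρ i))/2)) * ‖H Φ δ ρ‖ =
      ((2:ℝ)^m)⁻¹ * ∑ δ : Fin m → Bool, ∑ ρ : Fin m → Bool, ‖H Φ δ ρ‖ := by
    rw [Finset.sum_comm, Finset.mul_sum]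
    refine Finset.sum_congr rfl fun δ _ => ?_
    rw [Finset.sum_comm, Finset.mul_sum]
    refine Finset.sum_congr rfl fun ρ _ => ?_
    rw [← Finset.sum_mul, sum_prod_wu]
  calc ((2:ℝ)^m)⁻¹ * ∑ ε : Fin m → Bool, ‖GG Φ s ε‖
      ≤ ((2:ℝ)^m)⁻¹ * ∑ ε : Fin m → Bool, ((2/(1-s^2)) *
          ∑ δ : Fin m → Bool, ∑ ρ : Fin m → Bool,
            ((∏ r, w s (chi ε δ r)) * (∏ i, (1 + (chi ε δ i - s)/2 * sgnR (ρ i))/2)) *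
              ‖H Φ δ ρ‖) :=
        mul_le_mul_of_nonneg_left (Finset.sum_le_sum fun ε _ => hpt ε) (by positivity)
    _ = (2/(1-s^2)) * M Φ := by
        rw [← Finset.mul_sum, hsum, M, ← Finset.mul_sum]
        ring
    _ ≤ (2/(1-s)) * M Φ := by
        refine mul_le_mul_of_nonneg_right ?_ (M_nonneg Φ)
        refine div_le_div_of_nonneg_left (by norm_num) (by linarith) (by nlinarith)

lemma chi_self (ε : Fin m → Bool) (q : Fin m) : chi ε ε q = 1 := sgnR_mul_self (ε q)

lemma chi_neg_of_ne {ε δ : Fin m → Bool} {q : Fin m} (h : ε q ≠ δ q) : chi ε δ q = -1 := by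
  rw [chi]
  cases hε : ε q <;> cases hδ : δ q <;> first
    | (exfalso; rw [hε, hδ] at h; exact h rfl)
    | (rw [show sgnR true = 1 from rfl, show sgnR false = -1 from rfl]; ring)

lemma TT_one (Φ : (Fin m → Bool) → X) (ε : Fin m → Bool) : TT Φ 1 ε = Φ ε := by
  rw [TT]
  have h : ∀ δ : Fin m → Bool, (∏ q, w 1 (chi ε δ q)) = if δ = ε then 1 else 0 := by
    intro δ
    by_cases h : δ = ε
    · subst h
      rw [if_pos rfl]
      refine Finset.prod_eq_one fun q _ => ?_
      rw [chi_self, w]; norm_num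
    · rw [if_neg h]
      have : ∃ q, ε q ≠ δ q := by
        by_contra hc
        push_neg at hc
        exact h (funext fun q => (hc q).symm)
      obtain ⟨q, hq⟩ := this
      refine Finset.prod_eq_zero (Finset.mem_univ q) ?_
      rw [chi_neg_of_ne hq, w]; norm_num
  rw [Finset.sum_congr rfl fun δ _ => by rw [h δ]]
  simp only [ite_smul, one_smul, zero_smul]
  rw [Finset.sum_ite_eq' Finset.univ ε Φ, if_pos (Finset.mem_univ ε)]

lemma TT_zero (Φ : (Fin m → Bool) → X) (ε : Fin m → Bool) : TT Φ 0 ε = EavgVR Φ := by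
  rw [TT, EavgVR]
  have h : ∀ δ : Fin m → Bool, (∏ q, w 0 (chi ε δ q)) = ((2:ℝ)^m)⁻¹ := by
    intro δ
    have : ∀ q : Fin m, w 0 (chi ε δ q) = 2⁻¹ := fun q => by rw [w]; norm_num
    rw [Finset.prod_congr rfl fun q _ => this q, Finset.prod_const, Finset.card_univ,
      Fintype.card_fin, inv_pow]
  rw [Finset.sum_congr rfl fun δ _ => by rw [h δ]]
  rw [← Finset.smul_sum]
  congr 1
  rw [show (Fintype.card (Fin m → Bool) : ℝ) = 2^m by simp [Fintype.card_fun]]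

lemma continuous_normGG (Φ : (Fin m → Bool) → X) (ε : Fin m → Bool) :
    Continuous fun s => ‖GG Φ s ε‖ := (continuous_GG Φ ε).norm

lemma pisier (Φ : (Fin m → Bool) → X) [CompleteSpace X] (hm : 2 ≤ m) :
    ((2:ℝ)^m)⁻¹ * ∑ ε : Fin m → Bool, ‖Φ ε - EavgVR Φ‖ ≤
      (2 * Real.log m + 1) * M Φ := by
  have hm2 : (2:ℝ) ≤ m := by exact_mod_cast hm
  have hm0 : (0:ℝ) < m := by linarith
  set u : ℝ := 1 - (m:ℝ)⁻¹ with hu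
  have hminv : (0:ℝ) < (m:ℝ)⁻¹ := by positivity
  have hminv1 : (m:ℝ)⁻¹ ≤ 2⁻¹ := by
    rw [inv_le_inv₀ hm0 (by norm_num)]; exact hm2
  have hu0 : 0 ≤ u := by rw [hu]; linarith
  have hu1 : u < 1 := by rw [hu]; linarith
  have hint : ∀ (ε : Fin m → Bool) (a b : ℝ),
      ∫ s in a..b, GG Φ s ε = TT Φ b ε - TT Φ a ε := fun ε a b =>
    intervalIntegral.integral_eq_sub_of_hasDerivAt (fun t _ => hasDerivAt_TT Φ ε t)
      ((continuous_GG Φ ε).intervalIntegrable a b)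
  have hpt : ∀ ε : Fin m → Bool, ‖Φ ε - EavgVR Φ‖ ≤
      (∫ s in (0:ℝ)..u, ‖GG Φ s ε‖) + ∫ s in u..(1:ℝ), ‖GG Φ s ε‖ := by
    intro ε
    have h1 : Φ ε - EavgVR Φ = (TT Φ u ε - TT Φ 0 ε) + (TT Φ 1 ε - TT Φ u ε) := by
      rw [TT_one, TT_zero]; abel
    rw [h1]
    refine (norm_add_le _ _).trans (add_le_add ?_ ?_)
    · rw [← hint ε 0 u]
      exact intervalIntegral.norm_integral_le_integral_norm hu0
    · rw [← hint ε u 1]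
      exact intervalIntegral.norm_integral_le_integral_norm hu1.le
  have hex : ∀ (a b : ℝ), ((2:ℝ)^m)⁻¹ * ∑ ε : Fin m → Bool, (∫ s in a..b, ‖GG Φ s ε‖) =
      ∫ s in a..b, ((2:ℝ)^m)⁻¹ * ∑ ε : Fin m → Bool, ‖GG Φ s ε‖ := by
    intro a b
    rw [← intervalIntegral.integral_finset_sum
      (fun ε _ => ((continuous_GG Φ ε).norm).intervalIntegrable a b),
      ← intervalIntegral.integral_const_mul]
  have hcontNG : Continuous (fun s => ((2:ℝ)^m)⁻¹ * ∑ ε : Fin m → Bool, ‖GG Φ s ε‖) :=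
    continuous_const.mul (continuous_finset_sum _ fun ε _ => (continuous_GG Φ ε).norm)
  have hI2 : (∫ s in u..(1:ℝ), ((2:ℝ)^m)⁻¹ * ∑ ε : Fin m → Bool, ‖GG Φ s ε‖) ≤ M Φ := by
    have hb : (∫ _s in u..(1:ℝ), (m : ℝ) * M Φ) = M Φ := by
      rw [intervalIntegral.integral_const, smul_eq_mul]
      rw [hu]
      field_simp
      ring
    calc (∫ s in u..(1:ℝ), ((2:ℝ)^m)⁻¹ * ∑ ε : Fin m → Bool, ‖GG Φ s ε‖)
        ≤ ∫ _s in u..(1:ℝ), (m:ℝ) * M Φ :=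
          intervalIntegral.integral_mono_on hu1.le (hcontNG.intervalIntegrable _ _)
            intervalIntegrable_const
            (fun s hs => avg_tail Φ (le_trans hu0 hs.1) hs.2)
      _ = M Φ := hb
  have hI1 : (∫ s in (0:ℝ)..u, ((2:ℝ)^m)⁻¹ * ∑ ε : Fin m → Bool, ‖GG Φ s ε‖) ≤
      2 * Real.log m * M Φ := by
    have hne : ∀ s : ℝ, s ∈ Set.Icc (0:ℝ) u → 1 - s ≠ 0 := by
      intro s hs
      have := hs.2
      intro h0
      have : s = 1 := by linarith
      linarith [hu1, this ▸ hs.2]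
    have hcont2 : ContinuousOn (fun s : ℝ => 2/(1-s) * M Φ) (Set.uIcc 0 u) := by
      rw [Set.uIcc_of_le hu0]
      refine ContinuousOn.mul (ContinuousOn.div continuousOn_const (by fun_prop) ?_)
        continuousOn_const
      exact hne
    have hInt2 : IntervalIntegrable (fun s : ℝ => 2/(1-s) * M Φ)
        MeasureTheory.volume 0 u := hcont2.intervalIntegrable
    have hval : (∫ s in (0:ℝ)..u, 2/(1-s) * M Φ) = 2 * Real.log m * M Φ := by
      have hd : ∀ s ∈ Set.uIcc (0:ℝ) u,
          HasDerivAt (fun t => -(2 * M Φ) * Real.log (1 - t)) (2/(1-s) * M Φ) s := by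
        intro s hs
        rw [Set.uIcc_of_le hu0] at hs
        have hnes := hne s hs
        have h1 : HasDerivAt (fun t : ℝ => 1 - t) (-1) s := by
          simpa using (hasDerivAt_id s).const_sub 1
        have h2 : HasDerivAt (fun t : ℝ => Real.log (1 - t)) ((1-s)⁻¹ * (-1)) s :=
          (Real.hasDerivAt_log hnes).comp s h1
        have h3 := h2.const_mul (-(2 * M Φ))
        have heq : 2/(1-s) * M Φ = -(2 * M Φ) * ((1-s)⁻¹ * (-1)) := by ring
        rw [heq]
        exact h3
      rw [intervalIntegral.integral_eq_sub_of_hasDerivAt hd hInt2]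
      have h1u : (1:ℝ) - u = (m:ℝ)⁻¹ := by rw [hu]; ring
      rw [h1u, Real.log_inv]
      norm_num
      ring
    calc (∫ s in (0:ℝ)..u, ((2:ℝ)^m)⁻¹ * ∑ ε : Fin m → Bool, ‖GG Φ s ε‖)
        ≤ ∫ s in (0:ℝ)..u, 2/(1-s) * M Φ :=
          intervalIntegral.integral_mono_on hu0 (hcontNG.intervalIntegrable _ _) hInt2
            (fun s hs => by
              have h2 := avg_main Φ hs.1 (lt_of_le_of_lt hs.2 hu1)
              calc ((2:ℝ)^m)⁻¹ * ∑ ε : Fin m → Bool, ‖GG Φ s ε‖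
                  ≤ 2/(1-s) * M Φ := h2)
      _ = 2 * Real.log m * M Φ := hval
  calc ((2:ℝ)^m)⁻¹ * ∑ ε : Fin m → Bool, ‖Φ ε - EavgVR Φ‖
      ≤ ((2:ℝ)^m)⁻¹ * ∑ ε : Fin m → Bool,
          ((∫ s in (0:ℝ)..u, ‖GG Φ s ε‖) + ∫ s in u..(1:ℝ), ‖GG Φ s ε‖) :=
        mul_le_mul_of_nonneg_left (Finset.sum_le_sum fun ε _ => hpt ε) (by positivity)
    _ = (∫ s in (0:ℝ)..u, ((2:ℝ)^m)⁻¹ * ∑ ε : Fin m → Bool, ‖GG Φ s ε‖) +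
        ∫ s in u..(1:ℝ), ((2:ℝ)^m)⁻¹ * ∑ ε : Fin m → Bool, ‖GG Φ s ε‖ := by
        rw [Finset.sum_add_distrib, mul_add, hex, hex]
    _ ≤ 2 * Real.log m * M Φ + M Φ := add_le_add hI1 hI2
    _ = (2 * Real.log m + 1) * M Φ := by ring

lemma T2_spec (m : ℕ) (X : Type) [NormedAddCommGroup X] [NormedSpace ℝ X] :
    0 ≤ T2With m X ∧ ∀ x : Fin m → X,
      Real.sqrt (Eavg fun ε : Fin m → Bool => ‖∑ i, sgnR (ε i) • x i‖ ^ 2)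
        ≤ T2With m X * Real.sqrt (∑ i, ‖x i‖ ^ 2) := by
  set S : Set ℝ := {T : ℝ | 0 ≤ T ∧ ∀ x : Fin m → X,
    Real.sqrt (Eavg fun ε : Fin m → Bool => ‖∑ i, sgnR (ε i) • x i‖ ^ 2)
      ≤ T * Real.sqrt (∑ i, ‖x i‖ ^ 2)} with hS
  have hmem : Real.sqrt m ∈ S := by
    refine ⟨Real.sqrt_nonneg _, fun x => ?_⟩
    rw [← Real.sqrt_mul (by positivity : (0:ℝ) ≤ (m:ℝ))]
    apply Real.sqrt_le_sqrt
    have hpt : ∀ ε : Fin m → Bool, ‖∑ i, sgnR (ε i) • x i‖ ^ 2 ≤ (m:ℝ) * ∑ i, ‖x i‖ ^ 2 := by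
      intro ε
      have h1 : ‖∑ i, sgnR (ε i) • x i‖ ≤ ∑ i, ‖x i‖ :=
        (norm_sum_le _ _).trans (le_of_eq (Finset.sum_congr rfl fun i _ => norm_sgnR_smul _ _))
      have h2 : (∑ i, ‖x i‖) ^ 2 ≤ (m:ℝ) * ∑ i, ‖x i‖ ^ 2 := by
        have := Finset.sum_mul_sq_le_sq_mul_sq Finset.univ (fun _ => (1:ℝ)) (fun i => ‖x i‖)
        simpa using this
      calc ‖∑ i, sgnR (ε i) • x i‖ ^ 2 ≤ (∑ i, ‖x i‖) ^ 2 := by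
            exact pow_le_pow_left₀ (norm_nonneg _) h1 2
        _ ≤ (m:ℝ) * ∑ i, ‖x i‖ ^ 2 := h2
    rw [Eavg, div_le_iff₀ (by positivity : (0:ℝ) < (Fintype.card (Fin m → Bool) : ℝ))]
    calc ∑ ε : Fin m → Bool, ‖∑ i, sgnR (ε i) • x i‖ ^ 2
        ≤ ∑ _ε : Fin m → Bool, (m:ℝ) * ∑ i, ‖x i‖ ^ 2 :=
          Finset.sum_le_sum fun ε _ => hpt ε
      _ = (m:ℝ) * (∑ i, ‖x i‖ ^ 2) * (Fintype.card (Fin m → Bool) : ℝ) := by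
          rw [Finset.sum_const, Finset.card_univ, nsmul_eq_mul]; ring
  have hbdd : BddBelow S := ⟨0, fun T hT => hT.1⟩
  have hclosed : IsClosed S := by
    have hrw : S = (Set.Ici (0:ℝ)) ∩ ⋂ x : Fin m → X,
        {T : ℝ | Real.sqrt (Eavg fun ε : Fin m → Bool => ‖∑ i, sgnR (ε i) • x i‖ ^ 2)
          ≤ T * Real.sqrt (∑ i, ‖x i‖ ^ 2)} := by
      ext T
      simp only [hS, Set.mem_setOf_eq, Set.mem_inter_iff, Set.mem_Ici, Set.mem_iInter]
    rw [hrw]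
    exact isClosed_Ici.inter (isClosed_iInter fun x =>
      isClosed_le continuous_const (continuous_id.mul continuous_const))
  have hmem2 := hclosed.csInf_mem ⟨_, hmem⟩ hbdd
  exact hmem2

lemma Eavg_le_sqrt {α : Type} [Fintype α] [Nonempty α] (f : α → ℝ) (hf : ∀ a, 0 ≤ f a) :
    Eavg f ≤ Real.sqrt (Eavg fun a => f a ^ 2) := by
  have hN : (0:ℝ) < (Fintype.card α : ℝ) := by
    have := Fintype.card_pos (α := α)
    exact_mod_cast this
  have h1 : (∑ a, f a) ^ 2 ≤ (Fintype.card α : ℝ) * ∑ a, f a ^ 2 := by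
    have := Finset.sum_mul_sq_le_sq_mul_sq Finset.univ (fun _ => (1:ℝ)) f
    simpa using this
  have h0 : 0 ≤ Eavg f := by
    rw [Eavg]
    exact div_nonneg (Finset.sum_nonneg fun a _ => hf a) hN.le
  rw [← Real.sqrt_sq h0]
  apply Real.sqrt_le_sqrt
  rw [Eavg, Eavg, div_pow]
  rw [div_le_div_iff₀ (by positivity) hN]
  calc (∑ a, f a) ^ 2 * (Fintype.card α : ℝ)
      ≤ ((Fintype.card α : ℝ) * ∑ a, f a ^ 2) * (Fintype.card α : ℝ) := by
        exact mul_le_mul_of_nonneg_right h1 hN.le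
    _ = (∑ a, f a ^ 2) * (Fintype.card α : ℝ) ^ 2 := by ring

end P8

/-- there is a universal constant `C > 0` such that for every Banach space
`X`, every `m ≥ 2` and every function `Φ : {−1,1}^m → X`:
`𝔼_ε ‖Φ(ε)‖ ≤ ‖𝔼_ε Φ(ε)‖ + C · σ_Φ · T2^{(m)}(X)`. -/
theorem statement8 :
    ∃ C : ℝ, 0 < C ∧
      ∀ (X : Type) [NormedAddCommGroup X] [NormedSpace ℝ X] [CompleteSpace X]
        (m : ℕ), 2 ≤ m →
        ∀ Φ : (Fin m → Bool) → X,
          Eavg (fun ε => ‖Φ ε‖) ≤ ‖EavgVR Φ‖ + C * sigma Φ * T2With m X := by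
  refine ⟨4, by norm_num, ?_⟩
  intro X _ _ _ m hm Φ
  have hm2 : (2:ℝ) ≤ m := by exact_mod_cast hm
  have hcard : (Fintype.card (Fin m → Bool) : ℝ) = 2 ^ m := by simp [Fintype.card_fun]
  have hE : ∀ f : (Fin m → Bool) → ℝ, Eavg f = ((2:ℝ)^m)⁻¹ * ∑ ε, f ε := by
    intro f
    rw [Eavg, hcard, div_eq_inv_mul]
  have hL2 : Real.log 2 ≤ Real.log m := Real.log_le_log (by norm_num) hm2
  have hhalf : (1:ℝ)/2 < Real.log 2 := by
    have := Real.log_two_gt_d9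
    linarith
  set L := Real.log m with hLdef
  have hL : 1/2 < L := lt_of_lt_of_le hhalf hL2
  set S : ℝ := Eavg fun δ : Fin m → Bool => Real.sqrt (∑ q, ‖P8.D Φ q δ‖ ^ 2) with hSdef
  have hDnorm : ∀ (q : Fin m) (δ : Fin m → Bool),
      ‖P8.D Φ q δ‖ = ‖Φ δ - Φ (flipAt δ q)‖ / 2 := by
    intro q δ
    rw [P8.D, norm_smul, Real.norm_eq_abs, abs_of_nonneg (by norm_num : (0:ℝ) ≤ 2⁻¹)]
    ring
  have hsig : sigma Φ = L * S := by
    rw [sigma, Fintype.card_fin, hSdef]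
    congr 1
    refine congrArg Eavg (funext fun δ => ?_)
    congr 1
    exact Finset.sum_congr rfl fun q _ => by rw [hDnorm q δ]
  obtain ⟨hT0, hT⟩ := P8.T2_spec m X
  have hS0 : 0 ≤ S := by
    rw [hSdef, hE]
    positivity
  have hMS : P8.M Φ ≤ T2With m X * S := by
    rw [P8.M, hSdef, hE]
    have hδ : ∀ δ : Fin m → Bool, ((2:ℝ)^m)⁻¹ * ∑ ρ : Fin m → Bool, ‖P8.H Φ δ ρ‖ ≤
        T2With m X * Real.sqrt (∑ q, ‖P8.D Φ q δ‖ ^ 2) := by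
      intro δ
      have h1 : ((2:ℝ)^m)⁻¹ * ∑ ρ : Fin m → Bool, ‖P8.H Φ δ ρ‖ =
          Eavg fun ρ : Fin m → Bool => ‖P8.H Φ δ ρ‖ := (hE _).symm
      rw [h1]
      calc (Eavg fun ρ : Fin m → Bool => ‖P8.H Φ δ ρ‖)
          ≤ Real.sqrt (Eavg fun ρ : Fin m → Bool => ‖P8.H Φ δ ρ‖ ^ 2) :=
            P8.Eavg_le_sqrt _ fun ρ => norm_nonneg _
        _ ≤ T2With m X * Real.sqrt (∑ q, ‖P8.D Φ q δ‖ ^ 2) := hT (fun q => P8.D Φ q δ)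
    calc ((2:ℝ)^m)⁻¹ * ∑ δ : Fin m → Bool,
          ((2:ℝ)^m)⁻¹ * ∑ ρ : Fin m → Bool, ‖P8.H Φ δ ρ‖
        ≤ ((2:ℝ)^m)⁻¹ * ∑ δ : Fin m → Bool,
            T2With m X * Real.sqrt (∑ q, ‖P8.D Φ q δ‖ ^ 2) :=
          mul_le_mul_of_nonneg_left (Finset.sum_le_sum fun δ _ => hδ δ) (by positivity)
      _ = T2With m X * (((2:ℝ)^m)⁻¹ * ∑ δ : Fin m → Bool,
            Real.sqrt (∑ q, ‖P8.D Φ q δ‖ ^ 2)) := by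
          rw [← Finset.mul_sum]
          ring
  have hp := P8.pisier Φ hm
  have htri : Eavg (fun ε => ‖Φ ε‖) ≤ ‖EavgVR Φ‖ +
      ((2:ℝ)^m)⁻¹ * ∑ ε : Fin m → Bool, ‖Φ ε - EavgVR Φ‖ := by
    rw [hE]
    have hpt : ∀ ε : Fin m → Bool, ‖Φ ε‖ ≤ ‖EavgVR Φ‖ + ‖Φ ε - EavgVR Φ‖ := by
      intro ε
      calc ‖Φ ε‖ = ‖EavgVR Φ + (Φ ε - EavgVR Φ)‖ := by rw [add_sub_cancel]
        _ ≤ ‖EavgVR Φ‖ + ‖Φ ε - EavgVR Φ‖ := norm_add_le _ _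
    have h2pm : (0:ℝ) < 2^m := by positivity
    calc ((2:ℝ)^m)⁻¹ * ∑ ε : Fin m → Bool, ‖Φ ε‖
        ≤ ((2:ℝ)^m)⁻¹ * ∑ ε : Fin m → Bool, (‖EavgVR Φ‖ + ‖Φ ε - EavgVR Φ‖) :=
          mul_le_mul_of_nonneg_left (Finset.sum_le_sum fun ε _ => hpt ε) (by positivity)
      _ = ‖EavgVR Φ‖ + ((2:ℝ)^m)⁻¹ * ∑ ε : Fin m → Bool, ‖Φ ε - EavgVR Φ‖ := by
          rw [Finset.sum_add_distrib, Finset.sum_const, Finset.card_univ, nsmul_eq_mul,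
            hcard, mul_add]
          rw [← mul_assoc, inv_mul_cancel₀ (ne_of_gt h2pm), one_mul]
  calc Eavg (fun ε => ‖Φ ε‖)
      ≤ ‖EavgVR Φ‖ + ((2:ℝ)^m)⁻¹ * ∑ ε : Fin m → Bool, ‖Φ ε - EavgVR Φ‖ := htri
    _ ≤ ‖EavgVR Φ‖ + (2 * L + 1) * P8.M Φ := add_le_add_right hp _
    _ ≤ ‖EavgVR Φ‖ + (2 * L + 1) * (T2With m X * S) :=
        add_le_add_right (mul_le_mul_of_nonneg_left hMS (by linarith)) _
    _ ≤ ‖EavgVR Φ‖ + 4 * sigma Φ * T2With m X := by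
        apply add_le_add_right
        rw [hsig]
        nlinarith [mul_nonneg hT0 hS0, P8.M_nonneg Φ]
end
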